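/- If m ≥ 2, n ≥ 1, and there exists a surjective homomorphism from the surface group π₁(Σ_h) onto the free product F_n * ℤ_m, then h ≥ n + 1. -/

import Mathlib

/-- The commutator `x⁻¹ y⁻¹ x y`. -/
def commE {G : Type*} [Group G] (x y : G) : G := x⁻¹ * y⁻¹ * x * y

/-- The surface relator `[a₁,b₁]⋯[a_g,b_g]` in the free group on `a₁,…,a_g,b₁,…,b_g`. -/
def surfaceRel (g : ℕ) : FreeGroup (Fin g ⊕ Fin g) :=
  (List.ofFn fun i : Fin g =>
    commE (FreeGroup.of (Sum.inl i)) (FreeGroup.of (Sum.inr i))).prod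

/-- The fundamental group of the closed orientable surface of genus `g`. -/
abbrev SurfaceGroup (g : ℕ) : Type := PresentedGroup {surfaceRel g}


@[ext] structure Heis (p : ℕ) where
  x : ZMod p
  y : ZMod p
  z : ZMod (p ^ 2)

namespace Heis

variable {p : ℕ}

def iota (p : ℕ) (r : ZMod p) : ZMod (p ^ 2) := (p : ZMod (p ^ 2)) * (r.val : ZMod (p ^ 2))

lemma cast_pp : (p : ZMod (p ^ 2)) * (p : ZMod (p ^ 2)) = 0 := by
  rw [← pow_two, ← Nat.cast_pow, ZMod.natCast_self]

lemma iota_natCast (x : ℕ) : iota p ((x : ZMod p)) = (p : ZMod (p ^ 2)) * (x : ZMod (p ^ 2)) := by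
  rcases eq_or_ne p 0 with rfl | hp
  · simp [iota, ZMod.val]
  · have : NeZero p := ⟨hp⟩
    rw [iota, ZMod.val_natCast]
    conv_rhs => rw [← Nat.div_add_mod x p]
    push_cast
    rw [mul_add, ← mul_assoc, cast_pp, zero_mul, zero_add]

lemma iota_add (r s : ZMod p) : iota p (r + s) = iota p r + iota p s := by
  rcases eq_or_ne p 0 with rfl | hp
  · simp [iota, ZMod.val]
  · have : NeZero p := ⟨hp⟩
    have h1 : r + s = ((r.val + s.val : ℕ) : ZMod p) := by
      push_cast; rw [ZMod.natCast_val, ZMod.natCast_val, ZMod.cast_id, ZMod.cast_id]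
    rw [h1, iota_natCast]
    push_cast
    rw [mul_add]; rfl

lemma iota_injective (hp : p ≠ 0) : Function.Injective (iota p) := by
  have : NeZero p := ⟨hp⟩
  intro r s hrs
  have h2 : ((p * r.val : ℕ) : ZMod (p^2)) = ((p * s.val : ℕ) : ZMod (p^2)) := by
    push_cast; exact hrs
  have h3 : p * r.val ≡ p * s.val [MOD p^2] := (ZMod.natCast_eq_natCast_iff _ _ _).mp h2
  rw [pow_two] at h3
  have h4 : r.val ≡ s.val [MOD p] := Nat.ModEq.mul_left_cancel' hp h3
  have h5 : ((r.val : ℕ) : ZMod p) = ((s.val : ℕ) : ZMod p) := (ZMod.natCast_eq_natCast_iff _ _ _).mpr h4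
  rwa [ZMod.natCast_val, ZMod.natCast_val, ZMod.cast_id, ZMod.cast_id] at h5

lemma iota_zero : iota p 0 = 0 := by
  rcases eq_or_ne p 0 with rfl | hp
  · simp [iota, ZMod.val]
  · have : NeZero p := ⟨hp⟩
    simp [iota]


instance : Mul (Heis p) := ⟨fun a b => ⟨a.x + b.x, a.y + b.y, a.z + b.z + iota p (a.x * b.y)⟩⟩
instance : One (Heis p) := ⟨⟨0, 0, 0⟩⟩
instance : Inv (Heis p) := ⟨fun a => ⟨-a.x, -a.y, -a.z + iota p (a.x * a.y)⟩⟩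

lemma mul_def (a b : Heis p) :
    a * b = ⟨a.x + b.x, a.y + b.y, a.z + b.z + iota p (a.x * b.y)⟩ := rfl
lemma one_def : (1 : Heis p) = ⟨0, 0, 0⟩ := rfl
lemma inv_def (a : Heis p) : a⁻¹ = ⟨-a.x, -a.y, -a.z + iota p (a.x * a.y)⟩ := rfl

lemma iota_neg (t : ZMod p) : iota p (-t) = - iota p t := by
  have := iota_add (p := p) (-t) t
  rw [neg_add_cancel, iota_zero] at this
  exact eq_neg_of_add_eq_zero_left this.symm

lemma iota_sub (r s : ZMod p) : iota p (r - s) = iota p r - iota p s := by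
  rw [sub_eq_add_neg, iota_add, iota_neg, sub_eq_add_neg]

instance : Group (Heis p) where
  mul_assoc a b c := by
    refine Heis.ext ?_ ?_ ?_ <;> simp only [mul_def]
    · ring
    · ring
    · show a.z + b.z + iota p (a.x * b.y) + c.z + iota p ((a.x + b.x) * c.y)
        = a.z + (b.z + c.z + iota p (b.x * c.y)) + iota p (a.x * (b.y + c.y))
      rw [add_mul, mul_add, iota_add, iota_add]
      ring
  one_mul a := by
    refine Heis.ext ?_ ?_ ?_ <;> simp only [mul_def, one_def] <;> simp
    exact iota_zero
  mul_one a := by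
    refine Heis.ext ?_ ?_ ?_ <;> simp only [mul_def, one_def] <;> simp
    exact iota_zero
  inv_mul_cancel a := by
    refine Heis.ext ?_ ?_ ?_ <;> simp only [mul_def, inv_def, one_def] <;> simp
    rw [iota_neg]; ring

end Heis

section Cocycle
open Heis
variable {G : Type*} [Group G] {p : ℕ}
variable {a b : G → ZMod p} {q : G → ZMod (p^2)}

lemma addhom_one (ha : ∀ g h : G, a (g*h) = a g + a h) : a 1 = 0 := by
  have := ha 1 1; rw [mul_one] at this
  exact (right_eq_add.mp this)

lemma addhom_inv (ha : ∀ g h : G, a (g*h) = a g + a h) (g : G) : a g⁻¹ = - a g := by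
  have := ha g g⁻¹; rw [mul_inv_cancel, addhom_one ha] at this
  exact eq_neg_of_add_eq_zero_right this.symm

lemma addhom_commE (ha : ∀ g h : G, a (g*h) = a g + a h) (x y : G) : a (commE x y) = 0 := by
  simp only [commE, ha, addhom_inv ha]; ring

section
variable (ha : ∀ g h : G, a (g*h) = a g + a h) (hb : ∀ g h : G, b (g*h) = b g + b h)
  (hq : ∀ g h : G, q (g*h) = q g + q h + iota p (a g * b h))
include ha hb hq

lemma q_one : q 1 = 0 := by
  have := hq 1 1
  rw [mul_one, addhom_one ha, zero_mul, iota_zero, add_zero] at this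
  exact (right_eq_add.mp this)

lemma q_inv (g : G) : q g⁻¹ = - q g + iota p (a g * b g) := by
  have := hq g g⁻¹
  rw [mul_inv_cancel, q_one ha hb hq, addhom_inv hb] at this
  have h2 : iota p (a g * - b g) = - iota p (a g * b g) := by
    rw [show a g * - b g = -(a g * b g) by ring]
    have := iota_add (p := p) (-(a g * b g)) (a g * b g)
    rw [neg_add_cancel, iota_zero] at this
    exact eq_neg_of_add_eq_zero_left this.symm
  rw [h2] at this
  linear_combination -this

lemma q_commE (x y : G) : q (commE x y) = iota p (a x * b y) - iota p (a y * b x) := by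
  have e1 : q (x⁻¹ * y⁻¹) = q x⁻¹ + q y⁻¹ + iota p (a x * b y) := by
    rw [hq, addhom_inv ha, addhom_inv hb, show (-a x) * (-b y) = a x * b y by ring]
  have e2 : q (x⁻¹ * y⁻¹ * x) = q (x⁻¹ * y⁻¹) + q x + iota p ((- a x - a y) * b x) := by
    rw [hq]
    congr 2
    rw [ha, addhom_inv ha, addhom_inv ha]; ring
  have e3 : q (commE x y) = q (x⁻¹ * y⁻¹ * x) + q y + iota p ((- a y) * b y) := by
    rw [commE, hq]
    congr 2
    rw [ha, ha, addhom_inv ha, addhom_inv ha]; ring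
  rw [e3, e2, e1, q_inv ha hb hq, q_inv ha hb hq]
  rw [show (-a x - a y) * b x = (-(a x * b x)) + (-(a y * b x)) by ring,
      show (-a y) * b y = -(a y * b y) by ring, iota_add]
  rw [iota_neg, iota_neg, iota_neg]
  ring

lemma q_prod_commE (L : List (G × G)) :
    q ((L.map (fun z => commE z.1 z.2)).prod)
      = iota p ((L.map (fun z => a z.1 * b z.2 - a z.2 * b z.1)).sum) := by
  induction L with
  | nil => simpa [iota_zero] using q_one ha hb hq
  | cons w L ih =>
      simp only [List.map_cons, List.prod_cons, List.sum_cons]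
      rw [hq, addhom_commE ha, zero_mul, iota_zero, add_zero, ih, q_commE ha hb hq,
        iota_add, iota_sub]

theorem key_sum_vanish (hp : p ≠ 0) {N : ℕ} (x y : Fin N → G)
    (hrel : (List.ofFn fun i => commE (x i) (y i)).prod = 1) :
    (∑ i, (a (x i) * b (y i) - a (y i) * b (x i))) = 0 := by
  apply iota_injective hp
  rw [iota_zero]
  have := q_prod_commE ha hb hq (L := (List.finRange N).map (fun i => (x i, y i)))
  rw [List.map_map, List.map_map] at this
  simp only [Function.comp_def] at this
  rw [← List.ofFn_eq_map, ← List.ofFn_eq_map] at this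
  rw [hrel, q_one ha hb hq] at this
  rw [← List.sum_ofFn]
  exact this.symm
end

end Cocycle

section Chars
open Heis Monoid

variable {n m p : ℕ} (hpm : p ∣ m)

abbrev GG (n m : ℕ) := Monoid.Coprod (FreeGroup (Fin n)) (Multiplicative (ZMod m))

def torChar (d : ZMod p) : Multiplicative (ZMod m) →* Multiplicative (ZMod p) :=
  AddMonoidHom.toMultiplicative <| AddMonoidHom.mk'
    (fun g => d * (ZMod.castHom hpm (ZMod p) g))
    (by intro x y; rw [map_add]; ring)

def chi (hpm : p ∣ m) (c : Fin n → ZMod p) (d : ZMod p) : GG n m →* Multiplicative (ZMod p) :=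
  Coprod.lift (FreeGroup.lift fun i => Multiplicative.ofAdd (c i)) (torChar hpm d)

lemma chi_inl (c : Fin n → ZMod p) (d : ZMod p) (i : Fin n) :
    chi hpm c d (Coprod.inl (FreeGroup.of i)) = Multiplicative.ofAdd (c i) := by
  simp [chi]

lemma chi_inr (c : Fin n → ZMod p) (d : ZMod p) (g : Multiplicative (ZMod m)) :
    chi hpm c d (Coprod.inr g)
      = Multiplicative.ofAdd (d * (ZMod.castHom hpm (ZMod p) (Multiplicative.toAdd g))) := by
  simp [chi, torChar]

def mu (da db : ZMod p) (g : ZMod m) : ZMod (p ^ 2) :=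
  (((da * db).val * (p * (p + 1) / 2) * g.val ^ 2 : ℕ) : ZMod (p ^ 2))

lemma two_T : 2 * (p * (p + 1) / 2) = p * (p + 1) :=
  Nat.two_mul_div_two_of_even (Nat.even_mul_succ_self p)

variable [NeZero m] [NeZero p]

include hpm in
lemma cast_K_mod (c0 : ℕ) (t : ℕ) :
    ((c0 * (p * (p + 1) / 2) * (t % m) ^ 2 : ℕ) : ZMod (p ^ 2))
      = ((c0 * (p * (p + 1) / 2) * t ^ 2 : ℕ) : ZMod (p ^ 2)) := by
  set T := p * (p + 1) / 2 with hT
  obtain ⟨k, hk⟩ := hpm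
  have key : ∀ M : ℕ, (p^2 ∣ M) → ((M : ℕ) : ZMod (p^2)) = 0 := by
    intro M hM
    exact (ZMod.natCast_eq_zero_iff M (p^2)).mpr hM
  -- t = m * (t/m) + t % m
  conv_rhs => rw [← Nat.div_add_mod t m]
  have expand : c0 * T * (m * (t / m) + t % m) ^ 2
      = c0 * T * (t % m) ^ 2 + (2 * (c0 * T) * m) * ((t % m) * (t / m)) + (c0 * T) * m ^ 2 * (t / m) ^ 2 := by
    ring
  rw [expand]
  push_cast
  have h1 : ((2 * (c0 * T) * m : ℕ) : ZMod (p^2)) = 0 := by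
    apply key
    have : 2 * (c0 * T) * m = c0 * (2 * T) * m := by ring
    rw [this, two_T, hk]
    exact ⟨c0 * (p+1) * k, by ring⟩
  have h2 : ((c0 * T * m ^ 2 : ℕ) : ZMod (p^2)) = 0 := by
    apply key
    rw [hk]
    exact ⟨c0 * T * k ^ 2, by ring⟩
  push_cast at h1 h2
  linear_combination (-(((t % m : ℕ) : ZMod (p^2)) * ((t / m : ℕ) : ZMod (p^2)))) * h1
    + (-(((t / m : ℕ) : ZMod (p^2))^2)) * h2

lemma cast_K_add (c0 : ℕ) (s t : ℕ) :
    ((c0 * (p * (p + 1) / 2) * (s + t) ^ 2 : ℕ) : ZMod (p ^ 2))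
      = ((c0 * (p * (p + 1) / 2) * s ^ 2 : ℕ) : ZMod (p ^ 2))
        + ((c0 * (p * (p + 1) / 2) * t ^ 2 : ℕ) : ZMod (p ^ 2))
        + (p : ZMod (p ^ 2)) * ((c0 * s * t : ℕ) : ZMod (p ^ 2)) := by
  set T := p * (p + 1) / 2 with hT
  have expand : c0 * T * (s + t) ^ 2
      = c0 * T * s ^ 2 + c0 * T * t ^ 2 + (2 * T) * (c0 * s * t) := by ring
  rw [expand]
  rw [two_T, show p * (p+1) = p^2 + p by ring]
  push_cast
  rw [show ((p:ZMod (p^2))^2) = (((p^2 : ℕ)) : ZMod (p^2)) by push_cast; ring, ZMod.natCast_self]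
  ring

include hpm in
lemma mu_add (da db : ZMod p) (g h : ZMod m) :
    mu da db (g + h) = mu da db g + mu da db h
      + Heis.iota p ((da * (ZMod.castHom hpm (ZMod p) g)) * (db * (ZMod.castHom hpm (ZMod p) h))) := by
  have hval : (g + h).val = (g.val + h.val) % m := ZMod.val_add g h
  have step1 : mu da db (g + h)
      = (((da*db).val * (p * (p + 1) / 2) * (g.val + h.val) ^ 2 : ℕ) : ZMod (p ^ 2)) := by
    rw [mu, hval]; exact cast_K_mod hpm _ _
  rw [step1, cast_K_add]
  have rhs_eq : Heis.iota p ((da * (ZMod.castHom hpm (ZMod p) g)) * (db * (ZMod.castHom hpm (ZMod p) h)))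
      = (p : ZMod (p ^ 2)) * ((((da*db).val * g.val * h.val : ℕ)) : ZMod (p ^ 2)) := by
    have harg : (da * (ZMod.castHom hpm (ZMod p) g)) * (db * (ZMod.castHom hpm (ZMod p) h))
        = ((((da*db).val * g.val * h.val : ℕ)) : ZMod p) := by
      push_cast
      rw [ZMod.natCast_val, ZMod.natCast_val, ZMod.natCast_val, ZMod.cast_id,
        ZMod.castHom_apply, ZMod.castHom_apply]
      ring
    rw [harg, Heis.iota_natCast]
  rw [rhs_eq]
  rfl

def sFree (ca cb : Fin n → ZMod p) : FreeGroup (Fin n) →* Heis p :=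
  FreeGroup.lift fun i => ⟨ca i, cb i, 0⟩

def sTor (hpm : p ∣ m) (da db : ZMod p) : Multiplicative (ZMod m) →* Heis p where
  toFun := fun g => ⟨da * (ZMod.castHom hpm (ZMod p) (Multiplicative.toAdd g)),
                     db * (ZMod.castHom hpm (ZMod p) (Multiplicative.toAdd g)),
                     mu da db (Multiplicative.toAdd g)⟩
  map_one' := by
    have : mu (m := m) da db 0 = 0 := by simp [mu]
    simp [this, Heis.one_def]
  map_mul' := by
    intro g h
    rw [Heis.mul_def]
    have : Multiplicative.toAdd (g * h) = Multiplicative.toAdd g + Multiplicative.toAdd h := rfl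
    simp only [this, map_add]
    refine Heis.ext ?_ ?_ ?_ <;> dsimp
    · ring
    · ring
    · rw [mu_add hpm]
      simp [ZMod.castHom_apply]

def sLift (hpm : p ∣ m) (ca cb : Fin n → ZMod p) (da db : ZMod p) : GG n m →* Heis p :=
  Coprod.lift (sFree ca cb) (sTor hpm da db)

def px : Heis p →* Multiplicative (ZMod p) where
  toFun := fun a => Multiplicative.ofAdd a.x
  map_one' := rfl
  map_mul' := fun a b => rfl

def py : Heis p →* Multiplicative (ZMod p) where
  toFun := fun a => Multiplicative.ofAdd a.y
  map_one' := rfl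
  map_mul' := fun a b => rfl

lemma px_sLift (ca cb : Fin n → ZMod p) (da db : ZMod p) :
    (px.comp (sLift hpm ca cb da db)) = chi hpm ca da := by
  apply Coprod.hom_ext
  · apply FreeGroup.ext_hom
    intro i
    simp [sLift, sFree, px, chi]
  · ext g
    simp [sLift, sTor, px, chi_inr]

lemma py_sLift (ca cb : Fin n → ZMod p) (da db : ZMod p) :
    (py.comp (sLift hpm ca cb da db)) = chi hpm cb db := by
  apply Coprod.hom_ext
  · apply FreeGroup.ext_hom
    intro i
    simp [sLift, sFree, py, chi]
  · ext g
    simp [sLift, sTor, py, chi_inr]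

lemma exists_q (ca cb : Fin n → ZMod p) (da db : ZMod p) :
    ∃ q : GG n m → ZMod (p ^ 2), ∀ g h : GG n m,
      q (g * h) = q g + q h
        + Heis.iota p ((Multiplicative.toAdd (chi hpm ca da g)) * (Multiplicative.toAdd (chi hpm cb db h))) := by
  refine ⟨fun g => (sLift hpm ca cb da db g).z, fun g h => ?_⟩
  have hx : (sLift hpm ca cb da db g).x = Multiplicative.toAdd (chi hpm ca da g) := by
    have := congrArg (fun F => Multiplicative.toAdd (F g)) (px_sLift hpm ca cb da db)
    simpa [px] using this
  have hy : (sLift hpm ca cb da db h).y = Multiplicative.toAdd (chi hpm cb db h) := by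
    have := congrArg (fun F => Multiplicative.toAdd (F h)) (py_sLift hpm ca cb da db)
    simpa [py] using this
  dsimp only
  rw [← hx, ← hy, map_mul, Heis.mul_def]

end Chars

section Isotropy
open Heis Monoid

variable {n m p : ℕ} [NeZero m] [NeZero p]

theorem isotropy_sum (hpm : p ∣ m) (ca cb : Fin n → ZMod p) (da db : ZMod p)
    {N : ℕ} (x y : Fin N → GG n m)
    (hrel : (List.ofFn fun i => commE (x i) (y i)).prod = 1) :
    ∑ i, ((chi hpm ca da (x i)).toAdd * (chi hpm cb db (y i)).toAdd
        - (chi hpm ca da (y i)).toAdd * (chi hpm cb db (x i)).toAdd) = 0 := by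
  obtain ⟨q, hq⟩ := exists_q hpm ca cb da db
  exact key_sum_vanish (a := fun g => (chi hpm ca da g).toAdd)
    (b := fun g => (chi hpm cb db g).toAdd)
    (fun g h => by rw [map_mul]; rfl) (fun g h => by rw [map_mul]; rfl) hq
    (NeZero.ne p) x y hrel

theorem chi_add (hpm : p ∣ m) (c c' : Fin n → ZMod p) (d d' : ZMod p) (g : GG n m) :
    chi hpm (c + c') (d + d') g = chi hpm c d g * chi hpm c' d' g := by
  have : chi hpm (c + c') (d + d') = chi hpm c d * chi hpm c' d' := by
    apply Coprod.hom_ext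
    · apply FreeGroup.ext_hom
      intro i
      simp [chi_inl]
    · ext g
      simp [chi_inr]
      ring
  rw [this]
  rfl

theorem chi_pow (hpm : p ∣ m) (c : Fin n → ZMod p) (d : ZMod p) (r : ZMod p) (g : GG n m) :
    chi hpm (r • c) (r * d) g = (chi hpm c d g) ^ r.val := by
  have : chi hpm (r • c) (r * d) = (chi hpm c d) ^ r.val := by
    apply Coprod.hom_ext
    · apply FreeGroup.ext_hom
      intro i
      simp [chi_inl]
      rw [← ofAdd_nsmul, nsmul_eq_mul, ZMod.natCast_val, ZMod.cast_id]
    · ext g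
      simp [chi_inr]
      ring
  rw [this]
  rfl

end Isotropy

lemma map_commE {G H : Type*} [Group G] [Group H] (f : G →* H) (a b : G) :
    f (commE a b) = commE (f a) (f b) := by
  simp [commE, map_mul, map_inv]

open Monoid in
theorem genus_ge_of_surjects_onto_free_product (h n m : ℕ) (hm : 2 ≤ m) (hn : 1 ≤ n)
    (φ : SurfaceGroup h →* Coprod (FreeGroup (Fin n)) (Multiplicative (ZMod m)))
    (hφ : Function.Surjective φ) :
    n + 1 ≤ h := by
  obtain ⟨p, hp, hpm⟩ := Nat.exists_prime_and_dvd (show m ≠ 1 by omega)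
  haveI : NeZero m := ⟨by omega⟩
  haveI : NeZero p := ⟨hp.pos.ne'⟩
  haveI : Fact p.Prime := ⟨hp⟩
  set K := ZMod p with hK
  set x : Fin h → GG n m := fun i => φ (PresentedGroup.of (Sum.inl i)) with hxdef
  set y : Fin h → GG n m := fun i => φ (PresentedGroup.of (Sum.inr i)) with hydef
  have hrel : (List.ofFn fun i => commE (x i) (y i)).prod = 1 := by
    have h1 : PresentedGroup.mk {surfaceRel h} (surfaceRel h) = 1 := by
      rw [PresentedGroup.mk_eq_one_iff]
      exact Subgroup.subset_normalClosure (Set.mem_singleton _)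
    have h3 : (φ.comp (PresentedGroup.mk {surfaceRel h}))
        ((List.ofFn fun i : Fin h =>
          commE (FreeGroup.of (Sum.inl i)) (FreeGroup.of (Sum.inr i))).prod) = 1 := by
      show (φ.comp (PresentedGroup.mk {surfaceRel h})) (surfaceRel h) = 1
      simp [h1]
    rw [map_list_prod, List.map_ofFn] at h3
    rw [← h3]
    have heq : (fun i : Fin h => commE (x i) (y i))
        = (⇑(φ.comp (PresentedGroup.mk {surfaceRel h})) ∘ fun i =>
            commE (FreeGroup.of (Sum.inl i)) (FreeGroup.of (Sum.inr i))) := by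
      funext i
      simp only [Function.comp_apply, map_commE]
      rfl
    rw [heq]
  -- the pullback linear map
  let T : ((Fin n → K) × K) →ₗ[K] ((Fin h ⊕ Fin h) → K) := {
    toFun := fun w v => (chi hpm w.1 w.2 (φ (PresentedGroup.of v))).toAdd
    map_add' := by
      intro w w'
      funext v
      exact congrArg Multiplicative.toAdd
        (chi_add hpm w.1 w'.1 w.2 w'.2 (φ (PresentedGroup.of v)))
    map_smul' := by
      intro r w
      funext v
      have := chi_pow hpm w.1 w.2 r (φ (PresentedGroup.of v))
      have h2 : ((chi hpm (r • w.1) (r * w.2)) (φ (PresentedGroup.of v))).toAdd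
          = r.val • ((chi hpm w.1 w.2) (φ (PresentedGroup.of v))).toAdd := by
        rw [this]; rfl
      simp only [RingHom.id_apply, Pi.smul_apply, smul_eq_mul]
      rw [show ((r • w).1) = r • w.1 from rfl, show ((r • w).2) = r * w.2 from rfl] at *
      rw [h2, nsmul_eq_mul, ZMod.natCast_val, ZMod.cast_id] }
  have Tinj : Function.Injective T := by
    rw [injective_iff_map_eq_zero]
    intro w hw0
    have hchi1 : ∀ v, chi hpm w.1 w.2 (φ (PresentedGroup.of v)) = 1 := by
      intro v
      have := congrFun hw0 v
      have h4 : ((chi hpm w.1 w.2) (φ (PresentedGroup.of v))).toAdd = 0 := this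
      calc chi hpm w.1 w.2 (φ (PresentedGroup.of v))
          = Multiplicative.ofAdd (((chi hpm w.1 w.2) (φ (PresentedGroup.of v))).toAdd) := rfl
        _ = 1 := by rw [h4]; rfl
    have hchi : ∀ g, chi hpm w.1 w.2 g = 1 := by
      have hcomp : (chi hpm w.1 w.2).comp φ = (1 : SurfaceGroup h →* Multiplicative K) := by
        apply PresentedGroup.ext
        intro v
        simpa using hchi1 v
      intro g
      obtain ⟨s, rfl⟩ := hφ g
      have := congrArg (fun F : SurfaceGroup h →* Multiplicative K => F s) hcomp
      simpa using this
    have h1 : w.1 = 0 := by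
      funext i
      show w.1 i = 0
      have h6 := hchi (Coprod.inl (FreeGroup.of i))
      rw [chi_inl] at h6
      calc w.1 i = (Multiplicative.ofAdd (w.1 i)).toAdd := rfl
        _ = (1 : Multiplicative K).toAdd := by rw [h6]
        _ = 0 := rfl
    have h2 : w.2 = 0 := by
      have h7 := hchi (Coprod.inr (Multiplicative.ofAdd (1 : ZMod m)))
      rw [chi_inr] at h7
      have h5 : w.2 * (ZMod.castHom hpm (ZMod p)) (Multiplicative.toAdd (Multiplicative.ofAdd (1 : ZMod m))) = 0 := by
        have := congrArg Multiplicative.toAdd h7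
        simpa using this
      rw [toAdd_ofAdd, map_one, mul_one] at h5
      exact h5
    exact Prod.ext h1 h2
  -- the symplectic form
  let Ω : ((Fin h ⊕ Fin h) → K) →ₗ[K] ((Fin h ⊕ Fin h) → K) →ₗ[K] K :=
    LinearMap.mk₂ K (fun u v => ∑ i : Fin h,
        (u (Sum.inl i) * v (Sum.inr i) - u (Sum.inr i) * v (Sum.inl i)))
      (by intros; simp only [Pi.add_apply, ← Finset.sum_add_distrib]; apply Finset.sum_congr rfl; intros; ring)
      (by intros; simp only [Pi.smul_apply, smul_eq_mul, Finset.mul_sum]; erw [Finset.mul_sum]; apply Finset.sum_congr rfl; intros; ring)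
      (by intros; simp only [Pi.add_apply, ← Finset.sum_add_distrib]; apply Finset.sum_congr rfl; intros; ring)
      (by intros; simp only [Pi.smul_apply, smul_eq_mul, Finset.mul_sum]; exact Finset.sum_congr rfl fun _ _ => by ring)
  have Ωinj : Function.Injective Ω := by
    rw [injective_iff_map_eq_zero]
    intro u hu
    funext v
    have key : ∀ v', Ω u v' = 0 := fun v' => by rw [hu]; rfl
    rcases v with i | i
    · show u (Sum.inl i) = 0
      set s1 : (Fin h ⊕ Fin h) → K := Pi.single (Sum.inr i) (1:K) with hs1
      have hval : (Ω u s1) = u (Sum.inl i) := by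
        show (∑ j : Fin h, (u (Sum.inl j) * s1 (Sum.inr j)
            - u (Sum.inr j) * s1 (Sum.inl j))) = u (Sum.inl i)
        rw [hs1, Finset.sum_eq_single i]
        · simp
        · intro j _ hj
          rw [Pi.single_eq_of_ne (by simpa using hj), Pi.single_eq_of_ne (by simp)]
          ring
        · intro hi; exact absurd (Finset.mem_univ i) hi
      have h0 := key s1
      rw [hval] at h0
      exact h0
    · show u (Sum.inr i) = 0
      set s1 : (Fin h ⊕ Fin h) → K := Pi.single (Sum.inl i) (1:K) with hs1
      have hval : (Ω u s1) = - u (Sum.inr i) := by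
        show (∑ j : Fin h, (u (Sum.inl j) * s1 (Sum.inr j)
            - u (Sum.inr j) * s1 (Sum.inl j))) = - u (Sum.inr i)
        rw [hs1, Finset.sum_eq_single i]
        · simp
        · intro j _ hj
          rw [Pi.single_eq_of_ne (by simp), Pi.single_eq_of_ne (by simpa using hj)]
          ring
        · intro hi; exact absurd (Finset.mem_univ i) hi
      have h0 := key s1
      rw [hval] at h0
      exact neg_eq_zero.mp h0
  set W := LinearMap.range T with hWdef
  set U := Submodule.map Ω W with hUdef
  have hWU : W ≤ U.dualCoannihilator := by
    rintro v ⟨w, rfl⟩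
    rw [Submodule.mem_dualCoannihilator]
    rintro f ⟨u, hu, rfl⟩
    obtain ⟨w', rfl⟩ := hu
    exact isotropy_sum hpm w'.1 w.1 w'.2 w.2 x y hrel
  have hWrank : Module.finrank K ↥W = n + 1 := by
    rw [hWdef, LinearMap.finrank_range_of_inj Tinj]
    simp [Module.finrank_prod, Module.finrank_pi, Module.finrank_self]
  have hUrank : Module.finrank K ↥U = n + 1 := by
    rw [hUdef, ← LinearEquiv.finrank_eq (Submodule.equivMapOfInjective Ω Ωinj W)]
    exact hWrank
  have hVrank : Module.finrank K ((Fin h ⊕ Fin h) → K) = h + h := by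
    rw [Module.finrank_pi]; simp [Fintype.card_sum]
  have hsum := Subspace.finrank_add_finrank_dualCoannihilator_eq U
  have hle : Module.finrank K ↥W ≤ Module.finrank K ↥U.dualCoannihilator :=
    Submodule.finrank_mono hWU
  rw [hVrank, hUrank] at hsum
  rw [hWrank] at hle
  omega
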